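/- Let α₀ ∈ (2/3, 1], η₀ > 0, and σ_B, σ_g ≥ 0. Define α : ℕ → ℝ by α_t = α₀/t^{2/3} for t ≥ 1, and η : ℕ → ℝ by η_0 = η₀ and η_t = η₀/t^{2/3} for t ≥ 1. Let e : ℕ → ℝ satisfy e_t ≥ 0 for all t, e_0 ≤ σ_g², and for all t ≥ 1: e_{t−1} ≤ (1/α_t)(e_{t−1} − e_t) + 8σ_B² η_{t−1}²/α_t + 2α_t σ_g². Then for every integer T ≥ 1: Σ_{t=0}^{T−1} e_t ≤ C · T^{1/3}, where C = 3α₀ (48σ_B²η₀²/α₀ + (6α₀ + 1/α₀)σ_g²)/(3α₀ − 2). -/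

import Mathlib

open scoped BigOperators

lemma cube_rpow_third {x : ℝ} (hx : 0 ≤ x) : (x ^ ((1:ℝ)/3)) ^ (3:ℕ) = x := by
  rw [← Real.rpow_natCast (x ^ ((1:ℝ)/3)) 3, ← Real.rpow_mul hx]
  norm_num

lemma rpow_two_thirds_eq_sq {x : ℝ} (hx : 0 ≤ x) :
    x ^ ((2:ℝ)/3) = (x ^ ((1:ℝ)/3)) ^ (2:ℕ) := by
  rw [← Real.rpow_natCast (x ^ ((1:ℝ)/3)) 2, ← Real.rpow_mul hx]
  norm_num

lemma step_bound {x : ℝ} (hx : 1 ≤ x) :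
    (x + 1) ^ ((2:ℝ)/3) ≤ x ^ ((2:ℝ)/3) + 2/3 := by
  have hx0 : (0:ℝ) ≤ x := by linarith
  have hx1 : (0:ℝ) ≤ x + 1 := by linarith
  set u := x ^ ((1:ℝ)/3) with hu
  set v := (x+1) ^ ((1:ℝ)/3) with hv
  have hu3 : u ^ (3:ℕ) = x := cube_rpow_third hx0
  have hv3 : v ^ (3:ℕ) = x + 1 := cube_rpow_third hx1
  have hu1 : (1:ℝ) ≤ u := by
    rw [hu]
    calc (1:ℝ) = 1 ^ ((1:ℝ)/3) := (Real.one_rpow _).symm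
    _ ≤ x ^ ((1:ℝ)/3) := Real.rpow_le_rpow zero_le_one hx (by norm_num)
  have huv : u ≤ v := Real.rpow_le_rpow hx0 (by linarith) (by norm_num)
  rw [rpow_two_thirds_eq_sq hx1, rpow_two_thirds_eq_sq hx0]
  have hkey : (v - u) * (v^2 + u*v + u^2) = 1 := by nlinarith [hu3, hv3]
  nlinarith [sq_nonneg (u-1), sq_nonneg (v-1), mul_nonneg (by linarith : (0:ℝ) ≤ u-1) (by linarith : (0:ℝ) ≤ v-1), huv, hu1]

lemma sum_inv_rpow (n : ℕ) :
    ∑ s ∈ Finset.range n, ((s:ℝ)+1) ^ (-((2:ℝ)/3)) ≤ 3 * (n:ℝ) ^ ((1:ℝ)/3) := by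
  induction n with
  | zero => norm_num [Real.zero_rpow]
  | succ m ih =>
    rw [Finset.sum_range_succ]
    have hm0 : (0:ℝ) ≤ (m:ℝ) := Nat.cast_nonneg m
    have hm1 : (0:ℝ) ≤ (m:ℝ)+1 := by linarith
    set a := (m:ℝ) ^ ((1:ℝ)/3) with ha
    set b := ((m:ℝ)+1) ^ ((1:ℝ)/3) with hb
    have ha3 : a ^ (3:ℕ) = m := cube_rpow_third hm0
    have hb3 : b ^ (3:ℕ) = (m:ℝ)+1 := cube_rpow_third hm1
    have ha0 : 0 ≤ a := Real.rpow_nonneg hm0 _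
    have hab : a ≤ b := Real.rpow_le_rpow hm0 (by linarith) (by norm_num)
    have hb1 : (1:ℝ) ≤ b := by
      rw [hb]
      calc (1:ℝ) = 1 ^ ((1:ℝ)/3) := (Real.one_rpow _).symm
      _ ≤ ((m:ℝ)+1) ^ ((1:ℝ)/3) := Real.rpow_le_rpow zero_le_one (by linarith) (by norm_num)
    have hneg : ((m:ℝ)+1) ^ (-((2:ℝ)/3)) = (b^(2:ℕ))⁻¹ := by
      rw [Real.rpow_neg hm1, rpow_two_thirds_eq_sq hm1]
    have key : ((m:ℝ)+1) ^ (-((2:ℝ)/3)) ≤ 3*b - 3*a := by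
      rw [hneg]
      rw [inv_le_iff_one_le_mul₀ (by positivity)]
      have hfac : (b-a)*(b^2+a*b+a^2) = 1 := by nlinarith [ha3, hb3]
      nlinarith [hfac, mul_nonneg (mul_nonneg (sub_nonneg.2 hab) (sub_nonneg.2 hab)) (show (0:ℝ) ≤ 2*b+a by linarith)]
    have hcast : ((m+1:ℕ):ℝ) = (m:ℝ)+1 := by push_cast; ring
    rw [hcast]
    have : ((m:ℝ)+1) ^ ((1:ℝ)/3) = b := rfl
    push_cast
    linarith [ih, key]

lemma two_rpow_le : (2:ℝ) ^ ((2:ℝ)/3) ≤ 5/3 := by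
  have h1 : ((2:ℝ)^((2:ℝ)/3))^(3:ℕ) = 4 := by
    rw [← Real.rpow_natCast _ 3, ← Real.rpow_mul (by norm_num)]
    norm_num
  nlinarith [Real.rpow_nonneg (by norm_num : (0:ℝ) ≤ 2) ((2:ℝ)/3), h1, sq_nonneg ((2:ℝ)^((2:ℝ)/3))]

set_option maxHeartbeats 800000 in
/-- Deterministic sequence lemma underlying Theorem 1: summing and telescoping
the one-step recursion bounds the accumulated variance. -/
theorem sharp_sum_variance_bound
    (α₀ : ℝ) (hα₀ : α₀ ∈ Set.Ioc (2 / 3 : ℝ) 1)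
    (η₀ : ℝ) (hη₀ : 0 < η₀) (σB σg : ℝ) (hσB : 0 ≤ σB) (hσg : 0 ≤ σg)
    (α : ℕ → ℝ) (hα : ∀ t : ℕ, 1 ≤ t → α t = α₀ / (t : ℝ) ^ ((2 : ℝ) / 3))
    (η : ℕ → ℝ) (hη0 : η 0 = η₀)
    (hη : ∀ t : ℕ, 1 ≤ t → η t = η₀ / (t : ℝ) ^ ((2 : ℝ) / 3))
    (e : ℕ → ℝ) (he : ∀ t, 0 ≤ e t) (he0 : e 0 ≤ σg ^ 2)
    (hrec : ∀ t : ℕ, 1 ≤ t →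
      e (t - 1) ≤ (1 / α t) * (e (t - 1) - e t)
        + 8 * σB ^ 2 * (η (t - 1)) ^ 2 / α t + 2 * α t * σg ^ 2) :
    ∀ T : ℕ, 1 ≤ T →
      ∑ t ∈ Finset.range T, e t
        ≤ 3 * α₀ * (48 * σB ^ 2 * η₀ ^ 2 / α₀ + (6 * α₀ + 1 / α₀) * σg ^ 2)
            / (3 * α₀ - 2) * (T : ℝ) ^ ((1 : ℝ) / 3) := by
  obtain ⟨hA1, hA2⟩ := hα₀
  have hA0 : (0:ℝ) < α₀ := by linarith
  have hα1 : α 1 = α₀ := by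
    rw [hα 1 le_rfl]; norm_num
  -- positivity of α and rpow facts
  have hrp : ∀ t : ℕ, 1 ≤ t → (0:ℝ) < ((t:ℕ):ℝ) ^ ((2:ℝ)/3) := by
    intro t ht
    exact Real.rpow_pos_of_pos (by exact_mod_cast Nat.pos_of_ne_zero (by omega)) _
  have hαpos : ∀ t : ℕ, 1 ≤ t → 0 < α t := by
    intro t ht
    rw [hα t ht]; exact div_pos hA0 (hrp t ht)
  have hinv : ∀ t : ℕ, 1 ≤ t → 1 / α t = ((t:ℕ):ℝ) ^ ((2:ℝ)/3) / α₀ := by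
    intro t ht
    rw [hα t ht, one_div_div]
  -- the key telescoped induction
  have key : ∀ m : ℕ,
      (∑ t ∈ Finset.range (m+1), e t) + (1/α (m+1)) * e (m+1)
        ≤ (1/α 1) * e 0
          + ∑ s ∈ Finset.range m, (1/α (s+2) - 1/α (s+1)) * e (s+1)
          + ∑ s ∈ Finset.range (m+1),
              (8*σB^2*(η s)^2/α (s+1) + 2*α (s+1)*σg^2) := by
    intro m
    induction m with
    | zero =>
      simp only [Finset.sum_range_one, Finset.sum_range_zero, zero_add, add_zero]
      have h := hrec 1 le_rfl
      simp only [Nat.sub_self] at h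
      rw [mul_sub] at h
      linarith
    | succ k ih =>
      rw [Finset.sum_range_succ (f := e), Finset.sum_range_succ
        (f := fun s => (1/α (s+2) - 1/α (s+1)) * e (s+1)),
        Finset.sum_range_succ
        (f := fun s => 8*σB^2*(η s)^2/α (s+1) + 2*α (s+1)*σg^2)]
      have h := hrec (k+1+1) (by omega)
      simp only [Nat.add_sub_cancel] at h
      have h2 : k + 1 + 1 = k + 2 := rfl
      rw [h2] at h ⊢
      rw [mul_sub] at h
      rw [sub_mul]
      linarith [ih, h]
  -- main estimate
  intro T hT
  obtain ⟨m, rfl⟩ : ∃ m, T = m + 1 := ⟨T - 1, by omega⟩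
  set X := ((m+1:ℕ):ℝ) ^ ((1:ℝ)/3) with hX
  have hX1 : (1:ℝ) ≤ X := by
    rw [hX]
    calc (1:ℝ) = 1 ^ ((1:ℝ)/3) := (Real.one_rpow _).symm
    _ ≤ _ := Real.rpow_le_rpow zero_le_one (by exact_mod_cast Nat.one_le_iff_ne_zero.2 (by omega) : (1:ℝ) ≤ ((m+1:ℕ):ℝ)) (by norm_num)
  have hX0 : (0:ℝ) ≤ X := by linarith
  set S := ∑ t ∈ Finset.range (m+1), e t with hS
  have hSnn : 0 ≤ S := Finset.sum_nonneg fun i _ => he i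
  -- bound the middle (Abel) sum
  have hmid : ∑ s ∈ Finset.range m, (1/α (s+2) - 1/α (s+1)) * e (s+1)
      ≤ 2/(3*α₀) * S := by
    have step1 : ∀ s : ℕ, 1/α (s+2) - 1/α (s+1) ≤ 2/(3*α₀) := by
      intro s
      rw [hinv (s+2) (by omega), hinv (s+1) (by omega)]
      rw [div_sub_div_same, div_le_div_iff₀ (by positivity) (by positivity)]
      have hcast : ((s+2:ℕ):ℝ) = ((s+1:ℕ):ℝ) + 1 := by push_cast; ring
      have hsb := step_bound (x := ((s+1:ℕ):ℝ)) (by exact_mod_cast Nat.le_add_left 1 s)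
      rw [← hcast] at hsb
      nlinarith [hsb, hA0]
    calc ∑ s ∈ Finset.range m, (1/α (s+2) - 1/α (s+1)) * e (s+1)
        ≤ ∑ s ∈ Finset.range m, 2/(3*α₀) * e (s+1) := by
          apply Finset.sum_le_sum
          intro i _
          exact mul_le_mul_of_nonneg_right (step1 i) (he _)
      _ = 2/(3*α₀) * ∑ s ∈ Finset.range m, e (s+1) := by rw [Finset.mul_sum]
      _ ≤ 2/(3*α₀) * S := by
          apply mul_le_mul_of_nonneg_left _ (by positivity)
          rw [hS, Finset.sum_range_succ']
          have := he 0
          linarith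
  -- bound the "a" sum
  have hpartB : ∑ s ∈ Finset.range (m+1), 2*α (s+1)*σg^2 ≤ 6*α₀*σg^2 * X := by
    have heq : ∀ s : ℕ, 2*α (s+1)*σg^2 = 2*σg^2*α₀ * (((s:ℝ)+1) ^ (-((2:ℝ)/3))) := by
      intro s
      rw [hα (s+1) (by omega), Real.rpow_neg (by positivity)]
      push_cast
      ring
    calc ∑ s ∈ Finset.range (m+1), 2*α (s+1)*σg^2
        = 2*σg^2*α₀ * ∑ s ∈ Finset.range (m+1), ((s:ℝ)+1) ^ (-((2:ℝ)/3)) := by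
          rw [Finset.mul_sum]; exact Finset.sum_congr rfl fun i _ => heq i
      _ ≤ 2*σg^2*α₀ * (3 * ((m+1:ℕ):ℝ) ^ ((1:ℝ)/3)) := by
          apply mul_le_mul_of_nonneg_left _ (by positivity)
          have := sum_inv_rpow (m+1)
          push_cast at this ⊢
          linarith
      _ = 6*α₀*σg^2 * X := by rw [hX]; ring
  have hpartA : ∑ s ∈ Finset.range (m+1), 8*σB^2*(η s)^2/α (s+1)
      ≤ 48*σB^2*η₀^2/α₀ * X := by
    rw [Finset.sum_range_succ']
    have h0 : 8*σB^2*(η 0)^2/α (0+1) = 8*σB^2*η₀^2/α₀ := by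
      norm_num [hη0, hα1]
    have hterm : ∀ s : ℕ, 8*σB^2*(η (s+1))^2/α (s+1+1)
        ≤ (8*σB^2*η₀^2/α₀ * (5/3)) * (((s:ℝ)+1) ^ (-((2:ℝ)/3))) := by
      intro s
      rw [hη (s+1) (by omega), hα (s+1+1) (by omega)]
      have hy1 : (1:ℝ) ≤ ((s+1:ℕ):ℝ) := by exact_mod_cast Nat.le_add_left 1 s
      set y := ((s+1:ℕ):ℝ) with hy
      have hy0 : (0:ℝ) < y := by linarith
      set q := y ^ ((2:ℝ)/3) with hq
      have hq0 : 0 < q := Real.rpow_pos_of_pos hy0 _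
      set z := ((s+1+1:ℕ):ℝ) ^ ((2:ℝ)/3) with hz'
      have hz0 : 0 < z := Real.rpow_pos_of_pos (by positivity) _
      have hz : z ≤ 5/3 * q := by
        have h1 : ((s+1+1:ℕ):ℝ) ≤ 2 * y := by rw [hy]; push_cast; linarith
        calc z ≤ (2*y) ^ ((2:ℝ)/3) :=
              Real.rpow_le_rpow (by positivity) h1 (by norm_num)
          _ = 2 ^ ((2:ℝ)/3) * q := Real.mul_rpow (by norm_num) (le_of_lt hy0)
          _ ≤ 5/3 * q := mul_le_mul_of_nonneg_right two_rpow_le (le_of_lt hq0)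
      have hneg : ((s:ℝ)+1) ^ (-((2:ℝ)/3)) = q⁻¹ := by
        rw [hq, hy]
        push_cast
        rw [Real.rpow_neg (by positivity)]
      rw [hneg]
      have LHSeq : 8*σB^2*(η₀/q)^2/(α₀/z) = 8*σB^2*η₀^2*z/(q^2*α₀) := by
        field_simp
      have RHSeq : 8*σB^2*η₀^2/α₀*(5/3)*q⁻¹ = 8*σB^2*η₀^2*(5/3)/(q*α₀) := by
        field_simp
      rw [LHSeq, RHSeq, div_le_div_iff₀ (by positivity) (by positivity)]
      have hmm := mul_le_mul_of_nonneg_left hz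
        (show (0:ℝ) ≤ 8*σB^2*η₀^2*q*α₀ by positivity)
      calc 8*σB^2*η₀^2*z*(q*α₀) = (8*σB^2*η₀^2*q*α₀)*z := by ring
        _ ≤ (8*σB^2*η₀^2*q*α₀)*(5/3*q) := hmm
        _ = 8*σB^2*η₀^2*(5/3)*(q^2*α₀) := by ring
    have hc : (0:ℝ) ≤ 8*σB^2*η₀^2/α₀ := by positivity
    have hmX : (m:ℝ) ^ ((1:ℝ)/3) ≤ X := by
      rw [hX]
      push_cast
      exact Real.rpow_le_rpow (Nat.cast_nonneg m) (by linarith) (by norm_num)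
    have hsum2 : ∑ s ∈ Finset.range m, 8*σB^2*(η (s+1))^2/α (s+1+1)
        ≤ (8*σB^2*η₀^2/α₀ * (5/3)) * (3*(m:ℝ)^((1:ℝ)/3)) := by
      calc ∑ s ∈ Finset.range m, 8*σB^2*(η (s+1))^2/α (s+1+1)
          ≤ ∑ s ∈ Finset.range m,
              (8*σB^2*η₀^2/α₀ * (5/3)) * (((s:ℝ)+1) ^ (-((2:ℝ)/3))) :=
            Finset.sum_le_sum fun i _ => hterm i
        _ = (8*σB^2*η₀^2/α₀ * (5/3)) *
              ∑ s ∈ Finset.range m, ((s:ℝ)+1) ^ (-((2:ℝ)/3)) := by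
            rw [Finset.mul_sum]
        _ ≤ _ := mul_le_mul_of_nonneg_left (sum_inv_rpow m) (by positivity)
    rw [h0]
    have hm1 : (8*σB^2*η₀^2/α₀) * (m:ℝ)^((1:ℝ)/3) ≤ (8*σB^2*η₀^2/α₀) * X :=
      mul_le_mul_of_nonneg_left hmX hc
    have hm2 : (8*σB^2*η₀^2/α₀) * 1 ≤ (8*σB^2*η₀^2/α₀) * X :=
      mul_le_mul_of_nonneg_left hX1 hc
    have h6 : 48*σB^2*η₀^2/α₀ * X = (8*σB^2*η₀^2/α₀)*X*5 + (8*σB^2*η₀^2/α₀)*X := by ring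
    rw [h6]
    nlinarith [hsum2, hm1, hm2]
  -- assemble
  have hkey := key m
  have hpos : 0 ≤ (1/α (m+1)) * e (m+1) :=
    mul_nonneg (le_of_lt (one_div_pos.2 (hαpos (m+1) (by omega)))) (he (m+1))
  have hsplit : ∑ s ∈ Finset.range (m+1), (8*σB^2*(η s)^2/α (s+1) + 2*α (s+1)*σg^2)
      = (∑ s ∈ Finset.range (m+1), 8*σB^2*(η s)^2/α (s+1))
        + ∑ s ∈ Finset.range (m+1), 2*α (s+1)*σg^2 := Finset.sum_add_distrib
  have hc1 : (1/α 1) * e 0 ≤ σg^2/α₀ * X := by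
    rw [hα1]
    have h1 : (1/α₀) * e 0 ≤ (1/α₀) * σg^2 :=
      mul_le_mul_of_nonneg_left he0 (by positivity)
    have h2 : (1/α₀) * σg^2 ≤ σg^2/α₀ * X := by
      have : (1/α₀) * σg^2 = σg^2/α₀ * 1 := by ring
      rw [this]
      exact mul_le_mul_of_nonneg_left hX1 (by positivity)
    linarith
  have hS' : S ≤ σg^2/α₀*X + 2/(3*α₀)*S + 48*σB^2*η₀^2/α₀*X + 6*α₀*σg^2*X := by
    rw [hsplit] at hkey
    linarith [hkey, hpos, hmid, hpartA, hpartB, hc1]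
  have h3 : (0:ℝ) < 3*α₀ - 2 := by linarith
  have hα₀ne : α₀ ≠ 0 := ne_of_gt hA0
  rw [div_mul_eq_mul_div, le_div_iff₀ h3]
  have hR : 3*α₀*(48*σB^2*η₀^2/α₀ + (6*α₀ + 1/α₀)*σg^2)*X
      = (144*σB^2*η₀^2 + 18*α₀^2*σg^2 + 3*σg^2)*X := by
    field_simp
    ring
  rw [hR]
  have hmul := mul_le_mul_of_nonneg_right hS' (show (0:ℝ) ≤ 3*α₀ by linarith)
  have k1 : (σg^2/α₀*X + 2/(3*α₀)*S + 48*σB^2*η₀^2/α₀*X + 6*α₀*σg^2*X) * (3*α₀)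
      = 3*σg^2*X + 2*S + 144*σB^2*η₀^2*X + 18*α₀^2*σg^2*X := by
    field_simp
    ring
  rw [k1] at hmul
  have k2 : S*(3*α₀-2) = S*(3*α₀) - 2*S := by ring
  rw [k2]
  nlinarith [hmul, mul_nonneg hX0 (mul_nonneg (mul_nonneg (by norm_num : (0:ℝ) ≤ 18) (sq_nonneg α₀)) (sq_nonneg σg)), sq_nonneg σg]
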